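/- Let d ≥ 1 and let P ⊆ ℝ^d be a closed convex cone which is pointed (P ∩ (−P) = {0}), with topological interior Ω, and let a ∈ Ω. For k ∈ ℕ set L_k := (Ω + k•a) \ (Ω + (k+1)•a). Then Ω \ (P + a) is a nonempty open set (it contains a/2) contained in L_0, and consequently the Lebesgue measure λ(L_k) is strictly positive for every k ∈ ℕ. -/

import Mathlib

open Set Pointwise MeasureTheory

/-- For a pointed closed convex cone `P ⊆ ℝ^d` (`d ≥ 1`) with interior `Ω` and
`a ∈ Ω`, the set `Ω \ (P + a)` is open, contains `a/2` (hence is nonempty), is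
contained in `L 0`, and every `L k` has strictly positive Lebesgue measure. -/
theorem stmt_8 (d : ℕ) (hd : 1 ≤ d) (P : Set (Fin d → ℝ)) (hclosed : IsClosed P)
    (hadd : ∀ x ∈ P, ∀ y ∈ P, x + y ∈ P)
    (hsmul : ∀ (t : ℝ), 0 ≤ t → ∀ x ∈ P, t • x ∈ P)
    (hpointed : P ∩ (-P) = {0})
    (a : Fin d → ℝ) (ha : a ∈ interior P)
    (L : ℕ → Set (Fin d → ℝ))
    (hL : ∀ k : ℕ,
      L k = ((fun x => x + k • a) '' interior P) \ ((fun x => x + (k + 1) • a) '' interior P)) :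
    IsOpen (interior P \ ((fun x => x + a) '' P)) ∧
      ((1 / 2 : ℝ) • a) ∈ interior P \ ((fun x => x + a) '' P) ∧
      interior P \ ((fun x => x + a) '' P) ⊆ L 0 ∧
      (∀ k : ℕ, 0 < volume (L k)) := by
  have hΩopen : IsOpen (interior P) := isOpen_interior
  -- openness
  have hclosed' : IsClosed ((fun x => x + a) '' P) :=
    (Homeomorph.addRight a).isClosedMap _ hclosed
  have hopen : IsOpen (interior P \ ((fun x => x + a) '' P)) := hΩopen.sdiff hclosed'
  -- a ≠ 0
  have hane : a ≠ 0 := by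
    intro h0
    rw [h0] at ha
    obtain ⟨ε, hε, hball⟩ := Metric.mem_nhds_iff.mp (mem_interior_iff_mem_nhds.mp ha)
    set e : Fin d → ℝ := Pi.single (⟨0, hd⟩ : Fin d) (1 : ℝ) with he
    have hnorme : ‖e‖ = 1 := by rw [he, Pi.norm_single]; norm_num
    have hmem : ∀ t : ℝ, |t| < ε → t • e ∈ P := by
      intro t ht
      refine hball ?_
      rw [Metric.mem_ball, dist_zero_right, norm_smul, hnorme, mul_one]
      exact ht
    have h1 : (ε/2) • e ∈ P := hmem _ (by rw [abs_of_pos (by linarith)]; linarith)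
    have h2 : (ε/2) • e ∈ -P := by
      rw [Set.mem_neg, ← neg_smul]
      exact hmem _ (by rw [abs_neg, abs_of_pos (by linarith)]; linarith)
    have h3 : (ε/2) • e = 0 := by
      have := hpointed ▸ (Set.mem_inter h1 h2)
      simpa using this
    have : e ⟨0, hd⟩ = 0 := by
      have := congrFun h3 ⟨0, hd⟩
      simp only [Pi.smul_apply, Pi.zero_apply, smul_eq_mul] at this
      rcases mul_eq_zero.mp this with h | h
      · linarith
      · exact h
    rw [he] at this; simp at this
  -- a/2 ∈ interior P
  have hhalf : (1 / 2 : ℝ) • a ∈ interior P := by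
    have hmap : IsOpenMap (fun x : Fin d → ℝ => (1/2 : ℝ) • x) :=
      isOpenMap_smul₀ (by norm_num)
    have h1 : (fun x : Fin d → ℝ => (1/2 : ℝ) • x) '' interior P ⊆ P := by
      rintro _ ⟨x, hx, rfl⟩
      exact hsmul _ (by norm_num) x (interior_subset hx)
    exact interior_maximal h1 (hmap _ hΩopen) ⟨a, ha, rfl⟩
  -- a/2 ∉ P + a
  have hnotin : (1 / 2 : ℝ) • a ∉ (fun x => x + a) '' P := by
    rintro ⟨p, hp, hpa⟩
    have hp' : p = -((1/2 : ℝ) • a) := by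
      have := hpa
      funext i
      have := congrFun hpa i
      simp only [Pi.add_apply, Pi.smul_apply, smul_eq_mul, Pi.neg_apply] at *
      linarith
    have hmemneg : (1/2 : ℝ) • a ∈ -P := by
      rw [Set.mem_neg, ← hp']; exact hp
    have h3 : (1/2 : ℝ) • a = 0 := by
      have := hpointed ▸ Set.mem_inter (interior_subset hhalf) hmemneg
      simpa using this
    exact hane (by simpa using (smul_eq_zero.mp h3).resolve_left (by norm_num))
  -- subset of L 0
  have hsub : interior P \ ((fun x => x + a) '' P) ⊆ L 0 := by
    rw [hL 0]
    simp only [zero_smul, add_zero, zero_add, one_smul, Set.image_id']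
    intro x hx
    refine ⟨hx.1, fun hmem => hx.2 ?_⟩
    exact (Set.image_mono interior_subset) hmem
  refine ⟨hopen, ⟨hhalf, hnotin⟩, hsub, ?_⟩
  -- positivity of measure
  intro k
  have htrans : L k = (fun y => y + k • a) '' (L 0) := by
    rw [hL k, hL 0]
    rw [Set.image_diff (add_left_injective (k • a))]
    simp only [zero_smul, add_zero, zero_add, one_smul, Set.image_id', Set.image_image]
    congr 1
    · ext x; constructor
      · rintro ⟨y, hy, rfl⟩
        exact ⟨y, hy, by rw [succ_nsmul]; abel⟩
      · rintro ⟨y, hy, rfl⟩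
        exact ⟨y, hy, by rw [succ_nsmul]; abel⟩

  have hvol : volume (L k) = volume (L 0) := by
    rw [htrans, show (fun y : Fin d → ℝ => y + k • a) '' (L 0)
        = (fun y => y + -(k • a)) ⁻¹' (L 0) from by rw [← Set.image_add_right],
      measure_preimage_add_right]
  rw [hvol]
  have hpos : 0 < volume (interior P \ ((fun x => x + a) '' P)) :=
    hopen.measure_pos volume ⟨_, hhalf, hnotin⟩
  exact lt_of_lt_of_le hpos (measure_mono hsub)
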